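/- Let C be a closed model category. Given a commutative square in Prod(C) with left vertical morphism f an acyclic cofibration (a cofibration which is also a weak equivalence) and right vertical morphism g a fibration, there exists a diagonal morphism h from the bottom-left object to the top-right object making both triangles commute. That is, acyclic cofibrations in Prod(C) have the left lifting property with respect to fibrations. -/

import Mathlib

open CategoryTheory Limits

universe v u

/-- The category of formal products of objects of `C`. -/
structure FormalProd (C : Type u) [Category.{v} C] : Type (max u (v + 1)) where
  ι : Type v
  obj : ι → C

namespace FormalProd

variable {C : Type u} [Category.{v} C]

instance : Category.{v} (FormalProd C) where
  Hom A B := Σ r : B.ι → A.ι, ∀ j : B.ι, A.obj (r j) ⟶ B.obj j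
  id A := ⟨fun i => i, fun i => 𝟙 (A.obj i)⟩
  comp {A B D} f g := ⟨fun k => f.1 (g.1 k), fun k => f.2 (g.1 k) ≫ g.2 k⟩
  id_comp f := by obtain ⟨r, φ⟩ := f; simp
  comp_id f := by obtain ⟨r, φ⟩ := f; simp
  assoc f g h := by simp

/-- The index map of a morphism of formal products. -/
def Hom.index {A B : FormalProd C} (f : A ⟶ B) : B.ι → A.ι := f.1

/-- The components of a morphism of formal products. -/
def Hom.component {A B : FormalProd C} (f : A ⟶ B) (j : B.ι) :
    A.obj (Hom.index f j) ⟶ B.obj j := f.2 j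

end FormalProd

/-- A closed model category structure on `C` (Quillen): three classes of morphisms—
cofibrations, fibrations and weak equivalences—each containing the identities and
closed under composition and retracts; weak equivalences satisfy two-out-of-three;
(acyclic) cofibrations have the left lifting property with respect to (acyclic)
fibrations; and every morphism factors as a cofibration followed by an acyclic
fibration and as an acyclic cofibration followed by a fibration.  (The requirement
that `C` have all small limits and colimits is imposed separately via
`HasLimits C` and `HasColimits C`.) -/
structure ClosedModelStructure (C : Type u) [Category.{v} C] where
  cof : MorphismProperty C
  fib : MorphismProperty C
  weq : MorphismProperty C
  cof_id : ∀ X : C, cof (𝟙 X)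
  fib_id : ∀ X : C, fib (𝟙 X)
  weq_id : ∀ X : C, weq (𝟙 X)
  cof_comp : ∀ {X Y Z : C} (f : X ⟶ Y) (g : Y ⟶ Z), cof f → cof g → cof (f ≫ g)
  fib_comp : ∀ {X Y Z : C} (f : X ⟶ Y) (g : Y ⟶ Z), fib f → fib g → fib (f ≫ g)
  weq_comp : ∀ {X Y Z : C} (f : X ⟶ Y) (g : Y ⟶ Z), weq f → weq g → weq (f ≫ g)
  weq_of_comp_right : ∀ {X Y Z : C} (f : X ⟶ Y) (g : Y ⟶ Z),
    weq f → weq (f ≫ g) → weq g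
  weq_of_comp_left : ∀ {X Y Z : C} (f : X ⟶ Y) (g : Y ⟶ Z),
    weq g → weq (f ≫ g) → weq f
  cof_retract : ∀ {A A' B B' : C} (f : A ⟶ A') (g : B ⟶ B')
    (i : A ⟶ B) (r : B ⟶ A) (i' : A' ⟶ B') (r' : B' ⟶ A'),
    i ≫ r = 𝟙 A → i' ≫ r' = 𝟙 A' → i ≫ g = f ≫ i' → r ≫ f = g ≫ r' →
    cof g → cof f
  fib_retract : ∀ {A A' B B' : C} (f : A ⟶ A') (g : B ⟶ B')
    (i : A ⟶ B) (r : B ⟶ A) (i' : A' ⟶ B') (r' : B' ⟶ A'),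
    i ≫ r = 𝟙 A → i' ≫ r' = 𝟙 A' → i ≫ g = f ≫ i' → r ≫ f = g ≫ r' →
    fib g → fib f
  weq_retract : ∀ {A A' B B' : C} (f : A ⟶ A') (g : B ⟶ B')
    (i : A ⟶ B) (r : B ⟶ A) (i' : A' ⟶ B') (r' : B' ⟶ A'),
    i ≫ r = 𝟙 A → i' ≫ r' = 𝟙 A' → i ≫ g = f ≫ i' → r ≫ f = g ≫ r' →
    weq g → weq f
  lift_cof_acyclicFib : ∀ {A B X Y : C} (f : A ⟶ B) (g : X ⟶ Y) (u : A ⟶ X)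
    (v : B ⟶ Y), cof f → fib g → weq g → u ≫ g = f ≫ v →
    ∃ h : B ⟶ X, f ≫ h = u ∧ h ≫ g = v
  lift_acyclicCof_fib : ∀ {A B X Y : C} (f : A ⟶ B) (g : X ⟶ Y) (u : A ⟶ X)
    (v : B ⟶ Y), cof f → weq f → fib g → u ≫ g = f ≫ v →
    ∃ h : B ⟶ X, f ≫ h = u ∧ h ≫ g = v
  fact_cof_acyclicFib : ∀ {X Y : C} (f : X ⟶ Y),
    ∃ (Z : C) (i : X ⟶ Z) (p : Z ⟶ Y), cof i ∧ fib p ∧ weq p ∧ i ≫ p = f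
  fact_acyclicCof_fib : ∀ {X Y : C} (f : X ⟶ Y),
    ∃ (Z : C) (i : X ⟶ Z) (p : Z ⟶ Y), cof i ∧ weq i ∧ fib p ∧ i ≫ p = f

namespace FormalProd

variable {C : Type u} [Category.{v} C]

/-- A morphism of `Prod(C)` is a *cofibration* if all of its components are
cofibrations in `C`. -/
def prodCof (M : ClosedModelStructure C) : MorphismProperty (FormalProd C) :=
  fun _ B f => ∀ j : B.ι, M.cof (f.2 j)

/-- A morphism of `Prod(C)` is a *weak equivalence* if its index map is a bijection
and all of its components are weak equivalences in `C`. -/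
def prodWeq (M : ClosedModelStructure C) : MorphismProperty (FormalProd C) :=
  fun _ B f => Function.Bijective f.1 ∧ ∀ j : B.ι, M.weq (f.2 j)

/-- For a morphism `f : ∏_{i∈I} A_i ⟶ ∏_{j∈J} B_j` of `Prod(C)` and `i ∈ I`, the
induced morphism `f^i : A_i ⟶ ∏ { B_j | i_j = i }` into the product in `C` of the
`B_j` over those `j` with `i_j = i`, whose components are the `f_j` with `i_j = i`. -/
noncomputable def fiberMap [HasLimits C] {A B : FormalProd C} (f : A ⟶ B) (i : A.ι) :
    A.obj i ⟶ ∏ᶜ (fun j : {j : B.ι // f.1 j = i} => B.obj j.1) :=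
  Pi.lift fun j => eqToHom (congrArg A.obj j.2.symm) ≫ f.2 j.1

/-- A morphism `f` of `Prod(C)` is a *fibration* if for every index `i` of the source
the induced morphism `f^i` is a fibration in `C`. -/
def prodFib [HasLimits C] (M : ClosedModelStructure C) :
    MorphismProperty (FormalProd C) :=
  fun A _ f => ∀ i : A.ι, M.fib (fiberMap f i)

theorem hom_ext' {A B : FormalProd C} {p q : A ⟶ B} (h1 : ∀ j, p.1 j = q.1 j)
    (h2 : ∀ j, p.2 j = eqToHom (congrArg A.obj (h1 j)) ≫ q.2 j) : p = q := by
  obtain ⟨r, φ⟩ := p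
  obtain ⟨s, ψ⟩ := q
  have e : r = s := funext h1
  subst e
  exact congrArg (Sigma.mk r) (funext fun j => by simpa using h2 j)

theorem comp_congr_component {A B : FormalProd C} {p q : A ⟶ B} (h : p = q) (j : B.ι) :
    p.2 j = eqToHom (congrArg A.obj (congrFun (congrArg Sigma.fst h) j)) ≫ q.2 j := by
  subst h; simp

theorem component_eqToHom {A B : FormalProd C} (f : A ⟶ B) {b b' : B.ι} (e : b = b') :
    f.2 b ≫ eqToHom (congrArg B.obj e) =
      eqToHom (congrArg A.obj (congrArg f.1 e)) ≫ f.2 b' := by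
  subst e; simp

end FormalProd

open FormalProd in
/-- Acyclic cofibrations in `Prod(C)` have the left lifting property with respect to
fibrations: given a commutative square `u ≫ g = f ≫ v` with `f` a cofibration which
is also a weak equivalence and `g` a fibration, there is a diagonal `h` making both
triangles commute. -/
theorem formalProd_llp_acyclicCof_fib (C : Type u) [Category.{v} C]
    [HasLimits C] [HasColimits C] (M : ClosedModelStructure C)
    {A B X Y : FormalProd C} (f : A ⟶ B) (g : X ⟶ Y) (u : A ⟶ X) (v : B ⟶ Y)
    (hf : prodCof M f) (hf' : prodWeq M f) (hg : prodFib M g)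
    (hsq : u ≫ g = f ≫ v) :
    ∃ h : B ⟶ X, f ≫ h = u ∧ h ≫ g = v := by
  choose r hr using fun x : X.ι => hf'.1.2 (u.1 x)
  have hidx : ∀ j : Y.ι, u.1 (g.1 j) = f.1 (v.1 j) :=
    fun j => congrFun (congrArg Sigma.fst hsq) j
  have hrg : ∀ j : Y.ι, r (g.1 j) = v.1 j := fun j =>
    hf'.1.1 (by rw [hr, hidx])
  have hcomp : ∀ j : Y.ι,
      u.2 (g.1 j) ≫ g.2 j =
      eqToHom (congrArg A.obj (hidx j)) ≫ f.2 (v.1 j) ≫ v.2 j := by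
    intro j
    exact comp_congr_component hsq j
  have key : ∀ (j : Y.ι) (x : X.ι), g.1 j = x → r x = v.1 j := by
    rintro j x rfl; exact hrg j
  have hsq' : ∀ x : X.ι,
      (eqToHom (congrArg A.obj (hr x)) ≫ u.2 x) ≫ fiberMap g x =
      f.2 (r x) ≫ Pi.lift (fun j : {j : Y.ι // g.1 j = x} =>
        eqToHom (congrArg B.obj (key j.1 x j.2)) ≫ v.2 j.1) := by
    intro x
    apply Pi.hom_ext
    rintro ⟨j, hj⟩
    subst hj
    simp only [fiberMap, Category.assoc, limit.lift_π, Fan.mk_π_app, eqToHom_refl,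
      Category.id_comp]
    rw [hcomp j, ← Category.assoc (f.2 (r (g.1 j))), component_eqToHom f (hrg j)]
    simp
  have hl := fun x : X.ι =>
    M.lift_acyclicCof_fib _ _ _ _ (hf (r x)) (hf'.2 (r x)) (hg x) (hsq' x)
  choose ℓ hl1 hl2 using hl
  refine ⟨⟨r, ℓ⟩, ?_, ?_⟩
  · refine hom_ext' (h1 := fun x => hr x) ?_
    intro x
    exact hl1 x
  · refine hom_ext' (h1 := fun j => hrg j) ?_
    intro j
    have := hl2 (g.1 j) =≫ Pi.π _ ⟨j, rfl⟩
    simp only [Category.assoc, limit.lift_π, Fan.mk_π_app, fiberMap, eqToHom_refl,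
      Category.id_comp] at this
    exact this
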